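/- Consider a weighted strictly monotone game Γ with weights w_1,…,w_N and unique equilibrium x̄. Along every interior solution x(t) of the replicator dynamics, the weighted Kullback–Leibler divergence W_KL(x̄ ‖ x(t)) = Σ_k w_k Σ_i x̄_{ki} ln(x̄_{ki}/x_{ki}(t)) is strictly decreasing whenever x(t) ≠ x̄, and x(t) converges to x̄ as t → ∞. -/

import Mathlib

/-
STATEMENT 3: Consider a weighted strictly monotone game Γ with weights w_1,…,w_N
and unique equilibrium x̄. Along every interior solution x(t) of the replicator
dynamics, the weighted KL divergence W_KL(x̄ ‖ x(t)) is strictly decreasing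
whenever x(t) ≠ x̄, and x(t) converges to x̄ as t → ∞.
-/

open Filter Topology

noncomputable section

/-- Joint strategy space. -/
abbrev Strat {N : ℕ} (n : Fin N → ℕ) := ∀ k, Fin (n k) → ℝ

/-- `x` lies in `Δ = Δ₁ × ⋯ × Δ_N`. -/
def JointSimplex {N : ℕ} {n : Fin N → ℕ} (x : Strat n) : Prop :=
  ∀ k, x k ∈ stdSimplex ℝ (Fin (n k))

/-- `x` lies in the interior of `Δ`. -/
def JointInterior {N : ℕ} {n : Fin N → ℕ} (x : Strat n) : Prop :=
  ∀ k, (∀ i, 0 < x k i) ∧ ∑ i, x k i = 1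

/-- An interior solution of the replicator dynamics
`ẋ_{ki}/x_{ki} = r_{ki}(x) − ⟨x_k, r_k(x)⟩`. -/
def ReplicatorSolution {N : ℕ} {n : Fin N → ℕ} (r : Strat n → Strat n)
    (x : ℝ → Strat n) : Prop :=
  (∀ t, JointInterior (x t)) ∧
    ∀ t k i, HasDerivAt (fun s => x s k i)
      (x t k i * (r (x t) k i - ∑ j, x t k j * r (x t) k j)) t

/-- Gibbs' inequality: the KL divergence is nonnegative. -/
lemma gibbs_nonneg {m : ℕ} (p q : Fin m → ℝ) (hp : ∀ i, 0 ≤ p i) (hp1 : ∑ i, p i = 1)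
    (hq : ∀ i, 0 < q i) (hq1 : ∑ i, q i = 1) :
    0 ≤ ∑ i, p i * Real.log (p i / q i) := by
  have key : ∀ i, p i * Real.log (q i / p i) ≤ q i - p i := by
    intro i
    rcases eq_or_lt_of_le (hp i) with h | h
    · simp [← h, (hq i).le]
    · have hlog : Real.log (q i / p i) ≤ q i / p i - 1 :=
        Real.log_le_sub_one_of_pos (div_pos (hq i) h)
      have := mul_le_mul_of_nonneg_left hlog h.le
      calc p i * Real.log (q i / p i) ≤ p i * (q i / p i - 1) := this
        _ = q i - p i := by field_simp
  have hsum : ∑ i, p i * Real.log (q i / p i) ≤ 0 := by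
    calc ∑ i, p i * Real.log (q i / p i) ≤ ∑ i, (q i - p i) :=
          Finset.sum_le_sum fun i _ => key i
      _ = 0 := by rw [Finset.sum_sub_distrib, hp1, hq1, sub_self]
  have heq : ∀ i, p i * Real.log (p i / q i) = -(p i * Real.log (q i / p i)) := by
    intro i
    rcases eq_or_lt_of_le (hp i) with h | h
    · simp [← h]
    · rw [Real.log_div h.ne' (hq i).ne', Real.log_div (hq i).ne' h.ne']; ring
  calc (0:ℝ) = -(0:ℝ) := by ring
    _ ≤ -∑ i, p i * Real.log (q i / p i) := by linarith
    _ = ∑ i, p i * Real.log (p i / q i) := by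
        rw [← Finset.sum_neg_distrib]
        exact Finset.sum_congr rfl fun i _ => (heq i).symm

/-- Derivative of one term of the KL divergence along the flow. -/
lemma log_term_deriv (c : ℝ) (hc : 0 ≤ c) (f : ℝ → ℝ) (hf : ∀ s, 0 < f s) (d t : ℝ)
    (hd : HasDerivAt f (f t * d) t) :
    HasDerivAt (fun s => c * Real.log (c / f s)) (-(c * d)) t := by
  rcases eq_or_lt_of_le hc with h | h
  · have heq : (fun s => c * Real.log (c / f s)) = fun _ => (0:ℝ) := by
      funext s; rw [← h]; ring
    rw [heq, ← h]
    simpa using hasDerivAt_const t (0:ℝ)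
  · have hlog : HasDerivAt (fun s => Real.log (f s)) d t := by
      have h2 := hd.log (hf t).ne'
      have h3 : f t * d / f t = d := mul_div_cancel_left₀ d (hf t).ne'
      rwa [h3] at h2
    have h2 : HasDerivAt (fun s => c * (Real.log c - Real.log (f s))) (c * (0 - d)) t :=
      ((hasDerivAt_const t (Real.log c)).sub hlog).const_mul c
    have heq : (fun s => c * Real.log (c / f s))
        = fun s => c * (Real.log c - Real.log (f s)) := by
      funext s; rw [Real.log_div h.ne' (hf s).ne']
    rw [heq]
    convert h2 using 1; ring

theorem replicator_decreases_KL_in_weighted_strictly_monotone_games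
    {N : ℕ} {n : Fin N → ℕ}
    (r : Strat n → Strat n)
    (hr : ContinuousOn r {z | JointSimplex z})
    -- Γ is weighted strictly monotone with weights w (pseudo-gradient F_k = −r_k)
    (w : Fin N → ℝ) (hw : ∀ k, 0 < w k)
    (hmono : ∀ x y : Strat n, JointSimplex x → JointSimplex y → x ≠ y →
      0 < ∑ k, w k * ∑ i, (x k i - y k i) * ((- r x k i) - (- r y k i)))
    -- x̄ is the (unique) equilibrium of Γ
    (xbar : Strat n) (hxbarΔ : JointSimplex xbar)
    (hxbar : ∀ k, ∀ zk ∈ stdSimplex ℝ (Fin (n k)),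
      ∑ i, zk i * r xbar k i ≤ ∑ i, xbar k i * r xbar k i)
    -- x(t) is any interior solution of the replicator dynamics
    (x : ℝ → Strat n) (hx : ReplicatorSolution r x) :
    (∀ s t : ℝ, s < t → x s ≠ xbar →
        (∑ k, w k * ∑ i, xbar k i * Real.log (xbar k i / x t k i)) <
        (∑ k, w k * ∑ i, xbar k i * Real.log (xbar k i / x s k i))) ∧
      Tendsto x atTop (𝓝 xbar) := by
  obtain ⟨hxInt, hxDeriv⟩ := hx
  have hxΔ : ∀ t, JointSimplex (x t) := fun t k =>
    ⟨fun i => ((hxInt t k).1 i).le, (hxInt t k).2⟩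
  set Δs : Set (Strat n) := {z | JointSimplex z} with hΔsdef
  -- the function G (minus the derivative of the Lyapunov function)
  set G : Strat n → ℝ := fun z => ∑ k, w k * ∑ i, (xbar k i - z k i) * r z k i with hGdef
  have hGxbar : G xbar = 0 := by simp [hGdef]
  have hGpos : ∀ z ∈ Δs, z ≠ xbar → 0 < G z := by
    intro z hz hne
    have hm := hmono z xbar hz hxbarΔ hne
    have hsplit : ∀ k, ∑ i, (z k i - xbar k i) * ((- r z k i) - (- r xbar k i))
        = (∑ i, (xbar k i - z k i) * r z k i) - ∑ i, (xbar k i - z k i) * r xbar k i := by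
      intro k
      rw [← Finset.sum_sub_distrib]
      exact Finset.sum_congr rfl fun i _ => by ring
    have hEq : ∑ k, w k * ∑ i, (z k i - xbar k i) * ((- r z k i) - (- r xbar k i))
        = G z - ∑ k, w k * ∑ i, (xbar k i - z k i) * r xbar k i := by
      rw [hGdef, ← Finset.sum_sub_distrib]
      exact Finset.sum_congr rfl fun k _ => by rw [hsplit k]; ring
    have hE : 0 ≤ ∑ k, w k * ∑ i, (xbar k i - z k i) * r xbar k i := by
      apply Finset.sum_nonneg; intro k _
      apply mul_nonneg (hw k).le
      have h1 := hxbar k (z k) (hz k)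
      have h2 : ∑ i, (xbar k i - z k i) * r xbar k i
          = (∑ i, xbar k i * r xbar k i) - ∑ i, z k i * r xbar k i := by
        rw [← Finset.sum_sub_distrib]
        exact Finset.sum_congr rfl fun i _ => by ring
      rw [h2]; linarith
    rw [hEq] at hm; linarith
  have hGnonneg : ∀ t, 0 ≤ G (x t) := by
    intro t; by_cases h : x t = xbar
    · rw [h, hGxbar]
    · exact (hGpos _ (hxΔ t) h).le
  -- the Lyapunov function V
  set V : ℝ → ℝ := fun t => ∑ k, w k * ∑ i, xbar k i * Real.log (xbar k i / x t k i)
    with hVdef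
  have hVderiv : ∀ t, HasDerivAt V (-(G (x t))) t := by
    intro t
    have hterm : ∀ k, HasDerivAt (fun s => ∑ i, xbar k i * Real.log (xbar k i / x s k i))
        (∑ i, -(xbar k i * (r (x t) k i - ∑ j, x t k j * r (x t) k j))) t := by
      intro k
      apply HasDerivAt.fun_sum
      intro i _
      exact log_term_deriv (xbar k i) ((hxbarΔ k).1 i) (fun s => x s k i)
        (fun s => (hxInt s k).1 i) _ t (hxDeriv t k i)
    have hsum : HasDerivAt V
        (∑ k, w k * ∑ i, -(xbar k i * (r (x t) k i - ∑ j, x t k j * r (x t) k j))) t := by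
      rw [hVdef]; exact HasDerivAt.fun_sum fun k _ => (hterm k).const_mul (w k)
    have hkey : ∀ k, ∑ i, -(xbar k i * (r (x t) k i - ∑ j, x t k j * r (x t) k j))
        = -∑ i, (xbar k i - x t k i) * r (x t) k i := by
      intro k
      have h1 : ∑ i, xbar k i = 1 := (hxbarΔ k).2
      calc ∑ i, -(xbar k i * (r (x t) k i - ∑ j, x t k j * r (x t) k j))
          = (∑ i, xbar k i) * (∑ j, x t k j * r (x t) k j)
            - ∑ i, xbar k i * r (x t) k i := by
            rw [Finset.sum_mul, ← Finset.sum_sub_distrib]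
            exact Finset.sum_congr rfl fun i _ => by ring
        _ = (∑ j, x t k j * r (x t) k j) - ∑ i, xbar k i * r (x t) k i := by
            rw [h1, one_mul]
        _ = -∑ i, (xbar k i - x t k i) * r (x t) k i := by
            have h2 : ∑ i, (xbar k i - x t k i) * r (x t) k i
                = ∑ i, xbar k i * r (x t) k i - ∑ j, x t k j * r (x t) k j := by
              rw [← Finset.sum_sub_distrib]
              exact Finset.sum_congr rfl fun i _ => by ring
            rw [h2]; ring
    have hval : -(G (x t))
        = ∑ k, w k * ∑ i, -(xbar k i * (r (x t) k i - ∑ j, x t k j * r (x t) k j)) := by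
      rw [hGdef, ← Finset.sum_neg_distrib]
      exact Finset.sum_congr rfl fun k _ => by rw [hkey k]; ring
    rw [hval]; exact hsum
  have hVdiff : Differentiable ℝ V := fun t => (hVderiv t).differentiableAt
  have hVanti : Antitone V := by
    apply antitone_of_deriv_nonpos hVdiff
    intro t
    rw [(hVderiv t).deriv]
    exact neg_nonpos.2 (hGnonneg t)
  have hVnonneg : ∀ t, 0 ≤ V t := by
    intro t
    apply Finset.sum_nonneg; intro k _
    exact mul_nonneg (hw k).le
      (gibbs_nonneg _ _ (fun i => (hxbarΔ k).1 i) (hxbarΔ k).2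
        (fun i => (hxInt t k).1 i) (hxInt t k).2)
  -- Part 1: strict decrease
  have part1 : ∀ s t : ℝ, s < t → x s ≠ xbar → V t < V s := by
    intro s t hst hne
    have hds := hVderiv s
    have hneg : -(G (x s)) < 0 := neg_lt_zero.2 (hGpos _ (hxΔ s) hne)
    rw [hasDerivAt_iff_tendsto_slope] at hds
    have h1 : ∀ᶠ u in 𝓝[≠] s, slope V s u < 0 := hds.eventually_lt_const hneg
    have hle : 𝓝[>] s ≤ 𝓝[≠] s := nhdsWithin_mono s fun u hu => ne_of_gt hu
    have h2 : ∀ᶠ u in 𝓝[>] s, slope V s u < 0 := h1.filter_mono hle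
    have h3 : Set.Ioo s t ∈ 𝓝[>] s := Ioo_mem_nhdsGT_of_mem ⟨le_refl s, hst⟩
    obtain ⟨u, hu1, hu2⟩ := (h2.and (eventually_of_mem h3 fun u hu => hu)).exists
    rw [slope_def_field] at hu1
    have hpos : 0 < u - s := sub_pos.2 hu2.1
    have hVu : V u < V s := by
      rcases div_neg_iff.1 hu1 with ⟨_, h⟩ | ⟨h, _⟩
      · linarith
      · linarith
    exact lt_of_le_of_lt (hVanti hu2.2.le) hVu
  refine ⟨part1, ?_⟩
  -- Part 2: convergence
  have hΔcomp : IsCompact Δs := by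
    have hs : Δs = Set.pi Set.univ (fun k => stdSimplex ℝ (Fin (n k))) := by
      ext z; simp [hΔsdef, JointSimplex, Set.mem_pi]
    rw [hs]; exact isCompact_univ_pi fun k => isCompact_stdSimplex _ _
  have hrki : ∀ (k : Fin N) (i : Fin (n k)), ContinuousOn (fun z : Strat n => r z k i) Δs := by
    intro k i
    have h1 : Continuous (fun y : Strat n => y k i) :=
      (continuous_apply i).comp (continuous_apply k)
    exact h1.comp_continuousOn hr
  obtain ⟨M, hM0, hM⟩ : ∃ M, 0 ≤ M ∧ ∀ z ∈ Δs, ∀ k i, |r z k i| ≤ M := by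
    have hcont : ContinuousOn (fun z : Strat n => ∑ k, ∑ i, |r z k i|) Δs :=
      continuousOn_finset_sum _ fun k _ =>
        continuousOn_finset_sum _ fun i _ => (hrki k i).abs
    obtain ⟨z0, hz0, hmax⟩ := hΔcomp.exists_isMaxOn ⟨xbar, hxbarΔ⟩ hcont
    refine ⟨∑ k, ∑ i, |r z0 k i|,
      Finset.sum_nonneg fun k _ => Finset.sum_nonneg fun i _ => abs_nonneg _, ?_⟩
    intro z hz k i
    calc |r z k i| ≤ ∑ i', |r z k i'| :=
          Finset.single_le_sum (f := fun i' => |r z k i'|)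
            (fun i' _ => abs_nonneg _) (Finset.mem_univ i)
      _ ≤ ∑ k', ∑ i', |r z k' i'| :=
          Finset.single_le_sum (f := fun k' => ∑ i', |r z k' i'|)
            (fun k' _ => Finset.sum_nonneg fun i' _ => abs_nonneg _) (Finset.mem_univ k)
      _ ≤ ∑ k', ∑ i', |r z0 k' i'| := hmax hz
  have hx01 : ∀ t k i, 0 ≤ x t k i ∧ x t k i ≤ 1 := by
    intro t k i
    refine ⟨((hxInt t k).1 i).le, ?_⟩
    calc x t k i ≤ ∑ j, x t k j :=
          Finset.single_le_sum (f := fun j => x t k j)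
            (fun j _ => ((hxInt t k).1 j).le) (Finset.mem_univ i)
      _ = 1 := (hxInt t k).2
  set B : ℝ := 2 * M with hBdef
  have hB0 : 0 ≤ B := by rw [hBdef]; linarith
  have hvel : ∀ t k i, |x t k i * (r (x t) k i - ∑ j, x t k j * r (x t) k j)| ≤ B := by
    intro t k i
    have ha : |∑ j, x t k j * r (x t) k j| ≤ M := by
      calc |∑ j, x t k j * r (x t) k j| ≤ ∑ j, |x t k j * r (x t) k j| :=
            Finset.abs_sum_le_sum_abs _ _
        _ ≤ ∑ j, x t k j * M := by
            apply Finset.sum_le_sum; intro j _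
            rw [abs_mul, abs_of_nonneg (hx01 t k j).1]
            exact mul_le_mul_of_nonneg_left (hM _ (hxΔ t) k j) (hx01 t k j).1
        _ = (∑ j, x t k j) * M := (Finset.sum_mul _ _ _).symm
        _ = M := by rw [(hxInt t k).2, one_mul]
    have hrb := hM _ (hxΔ t) k i
    calc |x t k i * (r (x t) k i - ∑ j, x t k j * r (x t) k j)|
        = |x t k i| * |r (x t) k i - ∑ j, x t k j * r (x t) k j| := abs_mul _ _
      _ ≤ 1 * (|r (x t) k i| + |∑ j, x t k j * r (x t) k j|) := by
          apply mul_le_mul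
          · rw [abs_of_nonneg (hx01 t k i).1]; exact (hx01 t k i).2
          · exact abs_sub _ _
          · exact abs_nonneg _
          · norm_num
      _ ≤ B := by rw [hBdef, one_mul]; linarith
  have hlip : ∀ s t : ℝ, s ≤ t → ∀ k i, |x t k i - x s k i| ≤ B * (t - s) := by
    intro s t hst k i
    rcases eq_or_lt_of_le hst with h | h
    · rw [← h]; simp
    · obtain ⟨c, _, hceq⟩ := exists_hasDerivAt_eq_slope (fun u => x u k i)
        (fun u => x u k i * (r (x u) k i - ∑ j, x u k j * r (x u) k j)) h
        (fun u _ => ((hxDeriv u k i).continuousAt).continuousWithinAt)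
        (fun u _ => hxDeriv u k i)
      have hb := hvel c k i
      rw [hceq] at hb
      rw [abs_div, abs_of_pos (sub_pos.2 h)] at hb
      have := (div_le_iff₀ (sub_pos.2 h)).1 hb
      linarith [this]
  have hdist : ∀ s t : ℝ, s ≤ t → dist (x t) (x s) ≤ B * (t - s) := by
    intro s t hst
    have hBnn : 0 ≤ B * (t - s) := mul_nonneg hB0 (sub_nonneg.2 hst)
    rw [dist_pi_le_iff hBnn]
    intro k
    rw [dist_pi_le_iff hBnn]
    intro i
    rw [Real.dist_eq]
    exact hlip s t hst k i
  rw [Metric.tendsto_atTop]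
  by_contra hcon
  push_neg at hcon
  obtain ⟨ε, hε, hfar⟩ := hcon
  set K : Set (Strat n) := Δs ∩ {z | ε / 2 ≤ dist z xbar} with hKdef
  have hKcomp : IsCompact K :=
    hΔcomp.inter_right (isClosed_le continuous_const
      (Continuous.dist continuous_id continuous_const))
  obtain ⟨t1, _, ht1⟩ := hfar 0
  have hKne : K.Nonempty :=
    ⟨x t1, hxΔ t1, le_trans (by linarith : ε / 2 ≤ ε) ht1⟩
  have hGcont : ContinuousOn G Δs := by
    rw [hGdef]
    apply continuousOn_finset_sum; intro k _
    apply continuousOn_const.mul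
    apply continuousOn_finset_sum; intro i _
    have h1 : Continuous (fun z : Strat n => xbar k i - z k i) :=
      continuous_const.sub ((continuous_apply i).comp (continuous_apply k))
    exact h1.continuousOn.mul (hrki k i)
  obtain ⟨z0, hz0K, hz0min⟩ := hKcomp.exists_isMinOn hKne (hGcont.mono Set.inter_subset_left)
  have hmpos : 0 < G z0 := by
    apply hGpos z0 hz0K.1
    intro h
    have := hz0K.2
    rw [h] at this
    simp only [Set.mem_setOf_eq, dist_self] at this
    linarith
  set m : ℝ := G z0 with hmdef
  set δ : ℝ := ε / (2 * (B + 1)) with hδdef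
  have hδpos : 0 < δ := by
    rw [hδdef]; apply div_pos hε; positivity
  have hdrop : ∀ t0, ε ≤ dist (x t0) xbar → V (t0 + δ) ≤ V t0 - m * δ := by
    intro t0 hfar0
    have hin : ∀ u, t0 ≤ u → u ≤ t0 + δ → x u ∈ K := by
      intro u h1 h2
      refine ⟨hxΔ u, ?_⟩
      have hd1 : dist (x u) (x t0) ≤ B * (u - t0) := hdist t0 u h1
      have hd2 : B * (u - t0) ≤ ε / 2 := by
        have h3 : u - t0 ≤ δ := by linarith
        calc B * (u - t0) ≤ B * δ := mul_le_mul_of_nonneg_left h3 hB0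
          _ ≤ (B + 1) * δ := by nlinarith
          _ = ε / 2 := by rw [hδdef]; field_simp
      have htri : dist (x t0) xbar ≤ dist (x t0) (x u) + dist (x u) xbar :=
        dist_triangle _ _ _
      have hcomm : dist (x t0) (x u) = dist (x u) (x t0) := dist_comm _ _
      show ε / 2 ≤ dist (x u) xbar
      linarith
    obtain ⟨c, hc, hceq⟩ := exists_hasDerivAt_eq_slope V (fun u => -(G (x u)))
      (by linarith : t0 < t0 + δ)
      (fun u _ => (hVderiv u).continuousAt.continuousWithinAt)
      (fun u _ => hVderiv u)
    have hcK : x c ∈ K := hin c hc.1.le hc.2.le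
    have hmc : m ≤ G (x c) := hz0min hcK
    have hδne : t0 + δ - t0 = δ := by ring
    rw [hδne] at hceq
    have h5 : (V (t0 + δ) - V t0) / δ ≤ -m := by rw [← hceq]; linarith
    have h6 := (div_le_iff₀ hδpos).1 h5
    linarith
  have hiter : ∀ j : ℕ, ∃ t, V t ≤ V t1 - j * (m * δ) := by
    intro j; induction j with
    | zero => exact ⟨t1, by simp⟩
    | succ j ih =>
      obtain ⟨t, ht⟩ := ih
      obtain ⟨t', ht'ge, ht'far⟩ := hfar t
      refine ⟨t' + δ, ?_⟩
      have h1 := hdrop t' ht'far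
      have h2 : V t' ≤ V t := hVanti ht'ge
      push_cast
      linarith
  obtain ⟨j, hj⟩ := exists_nat_gt (V t1 / (m * δ))
  obtain ⟨t, ht⟩ := hiter j
  have hmd : 0 < m * δ := mul_pos hmpos hδpos
  rw [div_lt_iff₀ hmd] at hj
  have := hVnonneg t
  linarith
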